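/- For every superset-closed adversary A over a finite set Π, the set consensus power of A equals the minimal hitting set size of A: setcon(A) = csize(A). -/

import Mathlib

variable {α : Type*} [DecidableEq α]

/-- The restriction `A|_P` of an adversary `A` to a set of processes `P`:
the live sets of `A` that are contained in `P`. -/
def restrict (A : Finset (Finset α)) (P : Finset α) : Finset (Finset α) :=
  A.filter fun S => S ⊆ P

/-- The set consensus power `setcon A` of an adversary `A`:
`setcon ∅ = 0` and, for `A ≠ ∅`,
`setcon A = 1 + max_{S ∈ A} min_{a ∈ S} setcon (A|_{S \ {a}})`. -/
def setcon (A : Finset (Finset α)) : ℕ :=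
  if A = ∅ then 0
  else 1 + A.attach.sup fun S =>
    (S.1.attach.image fun a => setcon (restrict A (S.1.erase a.1))).min.untopD 0
termination_by A.card
decreasing_by
  apply Finset.card_lt_card
  rw [Finset.ssubset_def]
  refine ⟨Finset.filter_subset _ _, fun hsub => ?_⟩
  have hmem := hsub S.2
  rw [restrict, Finset.mem_filter] at hmem
  exact Finset.notMem_erase a.1 S.1 (hmem.2 a.2)

/-- The restriction `A|_{P,Q}`: live sets of `A` contained in `P` that intersect `Q`. -/
def restrictTo (A : Finset (Finset α)) (P Q : Finset α) : Finset (Finset α) :=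
  (restrict A P).filter fun S => (S ∩ Q).Nonempty

/-- An adversary is fair if for all `P` and all `Q ⊆ P`,
`setcon (A|_{P,Q}) = min |Q| (setcon (A|_P))`. -/
def Fair (A : Finset (Finset α)) : Prop :=
  ∀ P Q : Finset α, Q ⊆ P →
    setcon (restrictTo A P Q) = min Q.card (setcon (restrict A P))

/-- `csize A`: the minimal cardinality of a hitting set of `A`, i.e. of a set
intersecting every live set of `A`. -/
noncomputable def csize (A : Finset (Finset α)) : ℕ :=
  sInf {k | ∃ H : Finset α, H.card = k ∧ ∀ S ∈ A, (H ∩ S).Nonempty}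

lemma csize_le (A : Finset (Finset α)) (H : Finset α)
    (h : ∀ S ∈ A, (H ∩ S).Nonempty) : csize A ≤ H.card :=
  Nat.sInf_le ⟨H, rfl, h⟩

lemma csize_spec [Fintype α] (A : Finset (Finset α)) (hne : ∀ S ∈ A, S.Nonempty) :
    ∃ H : Finset α, H.card = csize A ∧ ∀ S ∈ A, (H ∩ S).Nonempty := by
  have hmem : csize A ∈ {k | ∃ H : Finset α, H.card = k ∧ ∀ S ∈ A, (H ∩ S).Nonempty} := by
    apply Nat.sInf_mem
    exact ⟨(Finset.univ : Finset α).card, Finset.univ, rfl, fun S hS => by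
      simpa using hne S hS⟩
  exact hmem

lemma setcon_empty : setcon (∅ : Finset (Finset α)) = 0 := by
  rw [setcon]; simp

lemma csize_empty : csize (∅ : Finset (Finset α)) = 0 :=
  Nat.le_zero.mp (by simpa using csize_le (∅ : Finset (Finset α)) ∅ (by simp))

lemma restrict_ssubset (A : Finset (Finset α)) (S : Finset α) (hS : S ∈ A) (a : α)
    (ha : a ∈ S) : restrict A (S.erase a) ⊂ A := by
  rw [Finset.ssubset_def]
  refine ⟨Finset.filter_subset _ _, fun hsub => ?_⟩
  have hmem := hsub hS
  rw [restrict, Finset.mem_filter] at hmem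
  exact Finset.notMem_erase a S (hmem.2 ha)

lemma setcon_eq_csize_aux [Fintype α] (n : ℕ) :
    ∀ (A : Finset (Finset α)) (P : Finset α), A.card ≤ n →
    (∀ S ∈ A, S.Nonempty) → (∀ S ∈ A, S ⊆ P) →
    (∀ S ∈ A, ∀ S' : Finset α, S ⊆ S' → S' ⊆ P → S' ∈ A) →
    setcon A = csize A := by
  induction n with
  | zero =>
    intro A P hcard _ _ _
    have hA : A = ∅ := Finset.card_eq_zero.mp (Nat.le_zero.mp hcard)
    rw [hA, setcon_empty, csize_empty]
  | succ n ih =>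
    intro A P hcard hne hsub hsc
    by_cases hA : A = ∅
    · rw [hA, setcon_empty, csize_empty]
    -- basic facts
    obtain ⟨S₀, hS₀⟩ := Finset.nonempty_iff_ne_empty.mpr hA
    have hPA : P ∈ A := hsc S₀ hS₀ P (hsub S₀ hS₀) (subset_refl P)
    obtain ⟨H, hHcard, hH⟩ := csize_spec A hne
    set k := csize A with hk
    have hk1 : 1 ≤ k := by
      obtain ⟨b, hb⟩ := hH S₀ hS₀
      have : H.Nonempty := ⟨b, (Finset.mem_inter.mp hb).1⟩
      have := Finset.card_pos.mpr this
      omega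
    -- the recursive call equals csize on any restriction
    have key : ∀ S ∈ A, ∀ a ∈ S,
        setcon (restrict A (S.erase a)) = csize (restrict A (S.erase a)) := by
      intro S hS a ha
      have hss := restrict_ssubset A S hS a ha
      have hlt := Finset.card_lt_card hss
      refine ih (restrict A (S.erase a)) (S.erase a) (by omega)
        (fun T hT => hne T (Finset.mem_of_mem_filter T hT))
        (fun T hT => (Finset.mem_filter.mp hT).2) ?_
      intro T hT T' hTT' hT'P
      rw [restrict, Finset.mem_filter] at hT ⊢
      refine ⟨hsc T hT.1 T' hTT' ?_, hT'P⟩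
      exact hT'P.trans ((Finset.erase_subset a S).trans (hsub S hS))
    rw [setcon, if_neg hA]
    apply le_antisymm
    · -- upper bound: 1 + sup ≤ k
      have hsup : (A.attach.sup fun S =>
          (S.1.attach.image fun a => setcon (restrict A (S.1.erase a.1))).min.untopD 0)
          ≤ k - 1 := by
        apply Finset.sup_le
        rintro ⟨S, hS⟩ -
        obtain ⟨a, haH⟩ := hH S hS
        rw [Finset.mem_inter] at haH
        have hmem : setcon (restrict A (S.erase a)) ∈
            S.attach.image fun b => setcon (restrict A (S.erase b.1)) :=
          Finset.mem_image.mpr ⟨⟨a, haH.2⟩, Finset.mem_attach _ _, rfl⟩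
        have hminle := Finset.min_le hmem
        -- bound the value
        have hval : setcon (restrict A (S.erase a)) ≤ k - 1 := by
          rw [key S hS a haH.2]
          have hcs : csize (restrict A (S.erase a)) ≤ (H.erase a).card := by
            apply csize_le
            intro T hT
            rw [restrict, Finset.mem_filter] at hT
            obtain ⟨b, hb⟩ := hH T hT.1
            rw [Finset.mem_inter] at hb
            have hba : b ≠ a := fun h => by
              have := hT.2 hb.2
              rw [h] at this
              exact Finset.notMem_erase a S this
            exact ⟨b, Finset.mem_inter.mpr ⟨Finset.mem_erase.mpr ⟨hba, hb.1⟩, hb.2⟩⟩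
          have : (H.erase a).card = k - 1 := by
            rw [Finset.card_erase_of_mem haH.1, hHcard]
          omega
        -- transfer through min/untop'
        obtain ⟨m, hm, hm'⟩ := WithTop.le_coe_iff.mp hminle
        rw [hm, WithTop.untopD_coe]
        omega
      omega
    · -- lower bound: k ≤ 1 + sup
      have hPne : P.Nonempty := hne P hPA
      have hterm : k - 1 ≤
          (P.attach.image fun a => setcon (restrict A (P.erase a.1))).min.untopD 0 := by
        have himne : (P.attach.image fun a => setcon (restrict A (P.erase a.1))).Nonempty :=
          (P.attach.image_nonempty).mpr (Finset.attach_nonempty_iff.mpr hPne)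
        rw [← Finset.coe_min' himne, WithTop.untopD_coe]
        obtain ⟨⟨a, ha⟩, -, hav⟩ := Finset.mem_image.mp (Finset.min'_mem _ himne)
        rw [← hav, key P hPA a ha]
        -- csize of restriction is at least k - 1
        obtain ⟨H', hH'card, hH'⟩ := csize_spec (restrict A (P.erase a))
          (fun T hT => hne T (Finset.mem_of_mem_filter T hT))
        have : k ≤ (insert a H').card := by
          apply csize_le
          intro T hT
          by_cases haT : a ∈ T
          · exact ⟨a, Finset.mem_inter.mpr ⟨Finset.mem_insert_self a H', haT⟩⟩
          · have hTm : T ∈ restrict A (P.erase a) := by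
              rw [restrict, Finset.mem_filter]
              exact ⟨hT, fun x hx => Finset.mem_erase.mpr
                ⟨fun h => haT (h ▸ hx), hsub T hT hx⟩⟩
            obtain ⟨b, hb⟩ := hH' T hTm
            rw [Finset.mem_inter] at hb
            exact ⟨b, Finset.mem_inter.mpr ⟨Finset.mem_insert_of_mem hb.1, hb.2⟩⟩
        have := Finset.card_insert_le a H'
        omega
      have hle := Finset.le_sup (f := fun S : {x // x ∈ A} =>
          (S.1.attach.image fun a => setcon (restrict A (S.1.erase a.1))).min.untopD 0)
          (Finset.mem_attach A ⟨P, hPA⟩)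
      dsimp only at hle
      omega

/-- For a superset-closed adversary, `setcon A = csize A`. -/
theorem setcon_eq_csize_of_supersetClosed [Fintype α] (A : Finset (Finset α))
    (hne : ∀ S ∈ A, S.Nonempty)
    (hsc : ∀ S ∈ A, ∀ S' : Finset α, S ⊆ S' → S' ∈ A) :
    setcon A = csize A := by
  exact setcon_eq_csize_aux A.card A Finset.univ le_rfl hne
    (fun S _ => Finset.subset_univ S)
    (fun S hS S' hSS' _ => hsc S hS S' hSS')
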